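/- Let M be a complex matrix, let A=(a_1,...,a_s) and B=(b_1,...,b_s) be tuples of distinct row and column indices of equal length, let â, a, ā be three further distinct row indices not occurring in A, and b̂, b̃, b, b̄ four further distinct column indices not occurring in B. Define the two 6-vectors W^{âaā,b̂bb̄} = (M^{âA,b̂B}, M^{âaāA,b̂bb̄B}, M^{âaA,b̂bB}, M^{âāA,b̂b̄B}, M^{âāA,b̂bB}, M^{âaA,b̂b̄B}) and W^{âaā,b̃bb̄} = (M^{âA,b̃B}, M^{âaāA,b̃bb̄B}, M^{âaA,b̃bB}, M^{âāA,b̃b̄B}, M^{âāA,b̃bB}, M^{âaA,b̃b̄B}). Then ⟨W^{âaā,b̂bb̄}, W^{âaā,b̃bb̄}⟩ = 0. -/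
import Mathlib

/-- The minor `M^{A,B}` of a matrix `M` with rows selected by the tuple `A`
and columns selected by the tuple `B`; for `s = 0` this equals `1`. -/
noncomputable def minor {I J : Type*} (M : I → J → ℂ) {s : ℕ}
    (A : Fin s → I) (B : Fin s → J) : ℂ :=
  Matrix.det (Matrix.of fun α β => M (A α) (B β))

/-- The inner product on `ℂ⁶` with respect to the block-diagonal metric
`diag([[0,1],[1,0]], −[[0,1],[1,0]], [[0,1],[1,0]])`. -/
def form (X Y : Fin 6 → ℂ) : ℂ :=
  X 0 * Y 1 + X 1 * Y 0 - X 2 * Y 3 - X 3 * Y 2 + X 4 * Y 5 + X 5 * Y 4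

/-- The 6-vector
`W^{âaā,b̂bb̄} = (M^{âA,b̂B}, M^{âaāA,b̂bb̄B}, M^{âaA,b̂bB}, M^{âāA,b̂b̄B}, M^{âāA,b̂bB}, M^{âaA,b̂b̄B})`. -/
noncomputable def wvec {I J : Type*} (M : I → J → ℂ) {s : ℕ}
    (A : Fin s → I) (B : Fin s → J)
    (ahat a abar : I) (bhat b bbar : J) : Fin 6 → ℂ :=
  ![minor M (Fin.cons ahat A) (Fin.cons bhat B),
    minor M (Fin.cons ahat (Fin.cons a (Fin.cons abar A)))
      (Fin.cons bhat (Fin.cons b (Fin.cons bbar B))),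
    minor M (Fin.cons ahat (Fin.cons a A)) (Fin.cons bhat (Fin.cons b B)),
    minor M (Fin.cons ahat (Fin.cons abar A)) (Fin.cons bhat (Fin.cons bbar B)),
    minor M (Fin.cons ahat (Fin.cons abar A)) (Fin.cons bhat (Fin.cons b B)),
    minor M (Fin.cons ahat (Fin.cons a A)) (Fin.cons bhat (Fin.cons bbar B))]

open Matrix
noncomputable section
variable {R : Type*} [CommRing R] {I J : Type*} {s : ℕ}

lemma cons_one {β : Type*} {n : ℕ} (x : β) (f : Fin (n+1) → β) :
    (Fin.cons x f : Fin (n+2) → β) 1 = f 0 := by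
  rw [show (1 : Fin (n+2)) = Fin.succ 0 by ext; simp, Fin.cons_succ]

lemma cons_two {β : Type*} {n : ℕ} (x : β) (f : Fin (n+2) → β) :
    (Fin.cons x f : Fin (n+3) → β) 2 = f 1 := by
  rw [show (2 : Fin (n+3)) = Fin.succ 1 by ext; simp [Fin.val_succ], Fin.cons_succ]

def ce1 (s : ℕ) : Fin (s+1) ≃ Fin 1 ⊕ Fin s where
  toFun := Fin.cons (Sum.inl 0) (fun j => Sum.inr j)
  invFun := Sum.elim (fun _ => 0) Fin.succ
  left_inv i := by induction i using Fin.cases <;> simp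
  right_inv p := by
    rcases p with i | j
    · simp [Subsingleton.elim i 0]
    · simp

def ce2 (s : ℕ) : Fin (s+2) ≃ Fin 2 ⊕ Fin s where
  toFun := Fin.cons (Sum.inl 0) (Fin.cons (Sum.inl 1) (fun j => Sum.inr j))
  invFun := Sum.elim (fun i => ![0, 1] i) (fun j => j.succ.succ)
  left_inv i := by
    induction i using Fin.cases with
    | zero => simp
    | succ j => induction j using Fin.cases <;> simp [cons_one]
  right_inv p := by
    rcases p with i | j
    · fin_cases i <;> simp [cons_one]
    · simp

def ce3 (s : ℕ) : Fin (s+3) ≃ Fin 3 ⊕ Fin s where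
  toFun := Fin.cons (Sum.inl 0) (Fin.cons (Sum.inl 1) (Fin.cons (Sum.inl 2) (fun j => Sum.inr j)))
  invFun := Sum.elim (fun i => ![0, 1, 2] i) (fun j => j.succ.succ.succ)
  left_inv i := by
    induction i using Fin.cases with
    | zero => simp
    | succ j =>
      induction j using Fin.cases with
      | zero => simp [cons_one]
      | succ k => induction k using Fin.cases <;> simp [cons_one, cons_two]
  right_inv p := by
    rcases p with i | j
    · fin_cases i <;> simp [cons_one, cons_two]
    · simp

/-- polymorphic minor -/
def minR (M : I → J → R) {s : ℕ} (A : Fin s → I) (B : Fin s → J) : R :=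
  Matrix.det (Matrix.of fun α β => M (A α) (B β))

/-- the block `D` -/
def Dm (M : I → J → R) (A : Fin s → I) (B : Fin s → J) : Matrix (Fin s) (Fin s) R :=
  Matrix.of fun α β => M (A α) (B β)

/-- the Schur complement entries -/
def nm (M : I → J → R) (A : Fin s → I) (B : Fin s → J) (x : I) (y : J) : R :=
  M x y - ∑ α, (∑ β, M x (B β) * (Dm M A B)⁻¹ β α) * M (A α) y

lemma minR_cons1 (M : I → J → R) (A : Fin s → I) (B : Fin s → J) (x : I) (y : J) :
    minR M (Fin.cons x A) (Fin.cons y B) =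
      Matrix.det (Matrix.fromBlocks
        (Matrix.of fun (_ : Fin 1) (_ : Fin 1) => M x y)
        (Matrix.of fun (_ : Fin 1) β => M x (B β))
        (Matrix.of fun α (_ : Fin 1) => M (A α) y)
        (Dm M A B)) := by
  rw [← Matrix.det_submatrix_equiv_self (ce1 s)]
  refine congrArg Matrix.det ?_
  ext α β
  induction α using Fin.cases <;> induction β using Fin.cases <;>
    simp [ce1, Dm, Matrix.submatrix_apply]

lemma minR_cons2 (M : I → J → R) (A : Fin s → I) (B : Fin s → J)
    (x x' : I) (y y' : J) :
    minR M (Fin.cons x (Fin.cons x' A)) (Fin.cons y (Fin.cons y' B)) =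
      Matrix.det (Matrix.fromBlocks
        (Matrix.of fun i j : Fin 2 => M (![x, x'] i) (![y, y'] j))
        (Matrix.of fun (i : Fin 2) β => M (![x, x'] i) (B β))
        (Matrix.of fun α (j : Fin 2) => M (A α) (![y, y'] j))
        (Dm M A B)) := by
  rw [← Matrix.det_submatrix_equiv_self (ce2 s)]
  refine congrArg Matrix.det ?_
  ext α β
  induction α using Fin.cases with
  | zero =>
    induction β using Fin.cases with
    | zero => simp [ce2, Dm, cons_one, cons_two]
    | succ b => induction b using Fin.cases <;> simp [ce2, Dm, cons_one, cons_two]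
  | succ a =>
    induction a using Fin.cases with
    | zero =>
      induction β using Fin.cases with
      | zero => simp [ce2, Dm, cons_one, cons_two]
      | succ b => induction b using Fin.cases <;> simp [ce2, Dm, cons_one, cons_two]
    | succ a' =>
      induction β using Fin.cases with
      | zero => simp [ce2, Dm, cons_one, cons_two]
      | succ b => induction b using Fin.cases <;> simp [ce2, Dm, cons_one, cons_two]

lemma minR_cons3 (M : I → J → R) (A : Fin s → I) (B : Fin s → J)
    (x x' x'' : I) (y y' y'' : J) :
    minR M (Fin.cons x (Fin.cons x' (Fin.cons x'' A)))
        (Fin.cons y (Fin.cons y' (Fin.cons y'' B))) =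
      Matrix.det (Matrix.fromBlocks
        (Matrix.of fun i j : Fin 3 => M (![x, x', x''] i) (![y, y', y''] j))
        (Matrix.of fun (i : Fin 3) β => M (![x, x', x''] i) (B β))
        (Matrix.of fun α (j : Fin 3) => M (A α) (![y, y', y''] j))
        (Dm M A B)) := by
  rw [← Matrix.det_submatrix_equiv_self (ce3 s)]
  refine congrArg Matrix.det ?_
  ext α β
  induction α using Fin.cases with
  | zero =>
    induction β using Fin.cases with
    | zero => simp [ce3, Dm, cons_one, cons_two]
    | succ b =>
      induction b using Fin.cases with
      | zero => simp [ce3, Dm, cons_one, cons_two]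
      | succ b' => induction b' using Fin.cases <;> simp [ce3, Dm, cons_one, cons_two]
  | succ a =>
    induction a using Fin.cases with
    | zero =>
      induction β using Fin.cases with
      | zero => simp [ce3, Dm, cons_one, cons_two]
      | succ b =>
        induction b using Fin.cases with
        | zero => simp [ce3, Dm, cons_one, cons_two]
        | succ b' => induction b' using Fin.cases <;> simp [ce3, Dm, cons_one, cons_two]
    | succ a' =>
      induction a' using Fin.cases with
      | zero =>
        induction β using Fin.cases with
        | zero => simp [ce3, Dm, cons_one, cons_two]
        | succ b =>
          induction b using Fin.cases with
          | zero => simp [ce3, Dm, cons_one, cons_two]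
          | succ b' => induction b' using Fin.cases <;> simp [ce3, Dm, cons_one, cons_two]
      | succ a'' =>
        induction β using Fin.cases with
        | zero => simp [ce3, Dm, cons_one, cons_two]
        | succ b =>
          induction b using Fin.cases with
          | zero => simp [ce3, Dm, cons_one, cons_two]
          | succ b' => induction b' using Fin.cases <;> simp [ce3, Dm, cons_one, cons_two]

lemma schur_block {k : ℕ} (M : I → J → R) (A : Fin s → I) (B : Fin s → J)
    [Invertible (Dm M A B)] (X : Fin k → I) (Y : Fin k → J) :
    Matrix.det (Matrix.fromBlocks
        (Matrix.of fun i j => M (X i) (Y j))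
        (Matrix.of fun (i : Fin k) β => M (X i) (B β))
        (Matrix.of fun α (j : Fin k) => M (A α) (Y j))
        (Dm M A B)) =
      (Dm M A B).det * Matrix.det (Matrix.of fun i j : Fin k => nm M A B (X i) (Y j)) := by
  rw [Matrix.det_fromBlocks₂₂]
  refine congrArg (_ * ·) (congrArg Matrix.det ?_)
  ext i j
  simp [nm, Matrix.mul_apply, Matrix.sub_apply, invOf_eq_nonsing_inv]

lemma minR1 (M : I → J → R) (A : Fin s → I) (B : Fin s → J)
    [Invertible (Dm M A B)] (x : I) (y : J) :
    minR M (Fin.cons x A) (Fin.cons y B) = (Dm M A B).det * nm M A B x y := by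
  rw [minR_cons1, schur_block M A B (fun _ => x) (fun _ => y), Matrix.det_fin_one]
  rfl

lemma minR2 (M : I → J → R) (A : Fin s → I) (B : Fin s → J)
    [Invertible (Dm M A B)] (x x' : I) (y y' : J) :
    minR M (Fin.cons x (Fin.cons x' A)) (Fin.cons y (Fin.cons y' B)) =
      (Dm M A B).det *
        (nm M A B x y * nm M A B x' y' - nm M A B x y' * nm M A B x' y) := by
  rw [minR_cons2, schur_block M A B ![x, x'] ![y, y'], Matrix.det_fin_two]
  simp

lemma minR3 (M : I → J → R) (A : Fin s → I) (B : Fin s → J)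
    [Invertible (Dm M A B)] (x x' x'' : I) (y y' y'' : J) :
    minR M (Fin.cons x (Fin.cons x' (Fin.cons x'' A)))
        (Fin.cons y (Fin.cons y' (Fin.cons y'' B))) =
      (Dm M A B).det *
        (nm M A B x y * nm M A B x' y' * nm M A B x'' y''
          - nm M A B x y * nm M A B x' y'' * nm M A B x'' y'
          - nm M A B x y' * nm M A B x' y * nm M A B x'' y''
          + nm M A B x y' * nm M A B x' y'' * nm M A B x'' y
          + nm M A B x y'' * nm M A B x' y * nm M A B x'' y'
          - nm M A B x y'' * nm M A B x' y' * nm M A B x'' y) := by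
  rw [minR_cons3, schur_block M A B ![x, x', x''] ![y, y', y''], Matrix.det_fin_three]
  simp [cons_two]

def EE (M : I → J → R) (A : Fin s → I) (B : Fin s → J)
    (ahat a abar : I) (bhat btilde b bbar : J) : R :=
  minR M (Fin.cons ahat A) (Fin.cons bhat B) *
      minR M (Fin.cons ahat (Fin.cons a (Fin.cons abar A)))
        (Fin.cons btilde (Fin.cons b (Fin.cons bbar B)))
    + minR M (Fin.cons ahat (Fin.cons a (Fin.cons abar A)))
        (Fin.cons bhat (Fin.cons b (Fin.cons bbar B))) *
      minR M (Fin.cons ahat A) (Fin.cons btilde B)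
    - minR M (Fin.cons ahat (Fin.cons a A)) (Fin.cons bhat (Fin.cons b B)) *
      minR M (Fin.cons ahat (Fin.cons abar A)) (Fin.cons btilde (Fin.cons bbar B))
    - minR M (Fin.cons ahat (Fin.cons abar A)) (Fin.cons bhat (Fin.cons bbar B)) *
      minR M (Fin.cons ahat (Fin.cons a A)) (Fin.cons btilde (Fin.cons b B))
    + minR M (Fin.cons ahat (Fin.cons abar A)) (Fin.cons bhat (Fin.cons b B)) *
      minR M (Fin.cons ahat (Fin.cons a A)) (Fin.cons btilde (Fin.cons bbar B))
    + minR M (Fin.cons ahat (Fin.cons a A)) (Fin.cons bhat (Fin.cons bbar B)) *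
      minR M (Fin.cons ahat (Fin.cons abar A)) (Fin.cons btilde (Fin.cons b B))

lemma EE_eq_zero_of_invertible (M : I → J → R) (A : Fin s → I) (B : Fin s → J)
    [Invertible (Dm M A B)]
    (ahat a abar : I) (bhat btilde b bbar : J) :
    EE M A B ahat a abar bhat btilde b bbar = 0 := by
  simp only [EE, minR1, minR2, minR3]
  ring
lemma minR_map {S : Type*} [CommRing S] (f : R →+* S) (M : I → J → R)
    (A : Fin s → I) (B : Fin s → J) :
    minR (fun i j => f (M i j)) A B = f (minR M A B) := by
  rw [minR, minR, RingHom.map_det]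
  rfl

lemma EE_map {S : Type*} [CommRing S] (f : R →+* S) (M : I → J → R)
    (A : Fin s → I) (B : Fin s → J)
    (ahat a abar : I) (bhat btilde b bbar : J) :
    EE (fun i j => f (M i j)) A B ahat a abar bhat btilde b bbar =
      f (EE M A B ahat a abar bhat btilde b bbar) := by
  simp only [EE, minR_map, _root_.map_add, _root_.map_sub, _root_.map_mul]

theorem EE_eq_zero (M : I → J → ℂ) (A : Fin s → I) (B : Fin s → J)
    (hA : Function.Injective A) (hB : Function.Injective B)
    (ahat a abar : I) (bhat btilde b bbar : J) :
    EE M A B ahat a abar bhat btilde b bbar = 0 := by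
  classical
  let K := FractionRing (Polynomial ℂ)
  let δ : I → J → ℂ := fun i j => if ∃ α, i = A α ∧ j = B α then 1 else 0
  let M' : I → J → Polynomial ℂ :=
    fun i j => Polynomial.C (M i j) + Polynomial.X * Polynomial.C (δ i j)
  have hDm : Dm M' A B = Matrix.charmatrix (-(Matrix.of fun α β => M (A α) (B β))) := by
    refine Matrix.ext fun α β => ?_
    by_cases h : α = β
    · subst h
      rw [Matrix.charmatrix_apply_eq]
      have hδ : δ (A α) (B α) = 1 := by
        have hex : ∃ γ, A α = A γ ∧ B α = B γ := ⟨α, rfl, rfl⟩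
        simp only [δ, if_pos hex]
      simp only [Dm, Matrix.of_apply, M', hδ, Matrix.neg_apply, map_neg, _root_.map_one, mul_one,
        sub_neg_eq_add]
      ring
    · rw [Matrix.charmatrix_apply_ne _ _ _ h]
      have hδ : δ (A α) (B β) = 0 := by
        have : ¬ ∃ γ, A α = A γ ∧ B β = B γ := by
          rintro ⟨γ, h1, h2⟩
          exact h ((hA h1).trans (hB h2).symm)
        simp only [δ, if_neg this]
      simp [Dm, M', hδ]
  have hdet : (Dm M' A B).det ≠ 0 := by
    rw [hDm]
    exact (Matrix.charpoly_monic _).ne_zero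
  let φ : Polynomial ℂ →+* K := algebraMap (Polynomial ℂ) K
  have hφ : Function.Injective φ := IsFractionRing.injective _ _
  have hdetK : (Dm (fun i j => φ (M' i j)) A B).det ≠ 0 := by
    have h : Dm (fun i j => φ (M' i j)) A B = φ.mapMatrix (Dm M' A B) := rfl
    rw [h, ← RingHom.map_det]
    intro hcon
    exact hdet (hφ (by rw [hcon, map_zero]))
  haveI : Invertible (Dm (fun i j => φ (M' i j)) A B) :=
    Matrix.invertibleOfIsUnitDet _ (isUnit_iff_ne_zero.mpr hdetK)
  have h0 : EE (fun i j => φ (M' i j)) A B ahat a abar bhat btilde b bbar = 0 :=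
    EE_eq_zero_of_invertible _ _ _ _ _ _ _ _ _ _
  rw [EE_map] at h0
  have h1 : EE M' A B ahat a abar bhat btilde b bbar = 0 := hφ (by rw [h0, map_zero])
  have h3 : EE (fun i j => (Polynomial.evalRingHom (0 : ℂ)) (M' i j))
      A B ahat a abar bhat btilde b bbar = 0 := by
    rw [EE_map, h1, map_zero]
  have h4 : (fun i j => (Polynomial.evalRingHom (0 : ℂ)) (M' i j)) = M := by
    funext i j
    simp [M']
  rw [← h4]
  exact h3
end

/-- `⟨W^{âaā,b̂bb̄}, W^{âaā,b̃bb̄}⟩ = 0`. -/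
theorem wvec_orthogonality {I J : Type*} (M : I → J → ℂ) {s : ℕ}
    (A : Fin s → I) (B : Fin s → J)
    (hA : Function.Injective A) (hB : Function.Injective B)
    (ahat a abar : I) (bhat btilde b bbar : J)
    (hr1 : ahat ≠ a) (hr2 : ahat ≠ abar) (hr3 : a ≠ abar)
    (hrA1 : ∀ α, ahat ≠ A α) (hrA2 : ∀ α, a ≠ A α) (hrA3 : ∀ α, abar ≠ A α)
    (hc1 : bhat ≠ btilde) (hc2 : bhat ≠ b) (hc3 : bhat ≠ bbar)
    (hc4 : btilde ≠ b) (hc5 : btilde ≠ bbar) (hc6 : b ≠ bbar)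
    (hcB1 : ∀ β, bhat ≠ B β) (hcB2 : ∀ β, btilde ≠ B β)
    (hcB3 : ∀ β, b ≠ B β) (hcB4 : ∀ β, bbar ≠ B β) :
    form (wvec M A B ahat a abar bhat b bbar)
      (wvec M A B ahat a abar btilde b bbar) = 0 := by
  have h5 : ∀ (v0 v1 v2 v3 v4 v5 : ℂ), ![v0, v1, v2, v3, v4, v5] 5 = v5 := fun _ _ _ _ _ _ => rfl
  have key := EE_eq_zero M A B hA hB ahat a abar bhat btilde b bbar
  simp only [EE, minR] at key
  simp only [form, wvec, minor, Matrix.cons_val_zero, Matrix.cons_val_one, Matrix.head_cons,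
    Matrix.cons_val_two, Matrix.tail_cons, Matrix.cons_val_three, Matrix.cons_val_four,
    Matrix.cons_val_succ, h5]
  linear_combination key
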